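/- Let η₁ ∈ (0,1). Suppose s ∈ ℝ^{|I|} satisfies m(s) ≤ m(ŝ) and the acceptance test f(x) − f(x + U_I s) ≥ η₁ (q(0) − q(s)). Then f(x) − f(x + U_I s) ≥ η₁ ((1 − β) α̂ ‖∇_I f(x)‖² + (σ/6)‖s‖³). -/

import Mathlib

open scoped RealInnerProductSpace

noncomputable section

/-- `U_I`: extension by zero from block coordinates to full coordinates. -/
def blockIncl {n : ℕ} (I : Finset (Fin n)) :
    EuclideanSpace ℝ ↥I →ₗ[ℝ] EuclideanSpace ℝ (Fin n) where
  toFun s := WithLp.toLp 2 (fun i => if h : i ∈ I then s ⟨i, h⟩ else 0)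
  map_add' s t := by ext i; by_cases h : i ∈ I <;> simp [h]
  map_smul' c s := by ext i; by_cases h : i ∈ I <;> simp [h]

/-- `U_Iᵀ`: restriction of a vector to the block coordinates. -/
def blockRestr {n : ℕ} (I : Finset (Fin n)) :
    EuclideanSpace ℝ (Fin n) →ₗ[ℝ] EuclideanSpace ℝ ↥I where
  toFun x := WithLp.toLp 2 (fun i => x i)
  map_add' x y := by ext i; simp
  map_smul' c x := by ext i; simp

/-- Block Hessian `U_Iᵀ H U_I` as a continuous linear map. -/
def blockHess {n : ℕ} (I : Finset (Fin n))
    (H : EuclideanSpace ℝ (Fin n) →L[ℝ] EuclideanSpace ℝ (Fin n)) :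
    EuclideanSpace ℝ ↥I →L[ℝ] EuclideanSpace ℝ ↥I :=
  LinearMap.toContinuousLinearMap
    ((blockRestr I) ∘ₗ ((H : EuclideanSpace ℝ (Fin n) →ₗ[ℝ] EuclideanSpace ℝ (Fin n)) ∘ₗ blockIncl I))

/-- Quadratic model `q(s) = f₀ + gᵀs + (1/2) sᵀ H s`. -/
def quadModel {E : Type*} [NormedAddCommGroup E] [InnerProductSpace ℝ E]
    (f₀ : ℝ) (g : E) (H : E →L[ℝ] E) (s : E) : ℝ :=
  f₀ + ⟪g, s⟫ + (1 / 2) * ⟪s, H s⟫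

/-- Cubic model `m(s) = q(s) + (σ/6) ‖s‖³`. -/
def cubicModel {E : Type*} [NormedAddCommGroup E] [InnerProductSpace ℝ E]
    (f₀ : ℝ) (g : E) (H : E →L[ℝ] E) (σ : ℝ) (s : E) : ℝ :=
  quadModel f₀ g H s + σ / 6 * ‖s‖ ^ 3

/-- Gradient of the cubic model: `∇m(s) = g + H s + (σ/2) ‖s‖ s`. -/
def cubicModelGrad {E : Type*} [NormedAddCommGroup E] [InnerProductSpace ℝ E]
    (g : E) (H : E →L[ℝ] E) (σ : ℝ) (s : E) : E :=
  g + H s + (σ / 2 * ‖s‖) • s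

/-- The stepsize `α̂ = min{β/‖H‖, √(3β/(σ‖g‖))}`, the first argument being `+∞` if `H = 0`. -/
def alphaHat {E : Type*} [NormedAddCommGroup E] [InnerProductSpace ℝ E]
    (β σ : ℝ) (g : E) (H : E →L[ℝ] E) : ℝ :=
  haveI := Classical.dec (H = 0)
  if H = 0 then Real.sqrt (3 * β / (σ * ‖g‖))
  else min (β / ‖H‖) (Real.sqrt (3 * β / (σ * ‖g‖)))

/-- The Cauchy-like point `ŝ = -α̂ g`. -/
def sHat {E : Type*} [NormedAddCommGroup E] [InnerProductSpace ℝ E]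
    (β σ : ℝ) (g : E) (H : E →L[ℝ] E) : E :=
  -(alphaHat β σ g H) • g

lemma cauchy_decrease {E : Type*} [NormedAddCommGroup E] [InnerProductSpace ℝ E]
    (f₀ : ℝ) (g : E) (H : E →L[ℝ] E) (σ β : ℝ) (hσ : 0 < σ) (hβ0 : 0 < β)
    (hg : g ≠ 0) :
    (1 - β) * alphaHat β σ g H * ‖g‖ ^ 2 ≤ f₀ - cubicModel f₀ g H σ (sHat β σ g H) := by
  set A := alphaHat β σ g H with hA
  have hgn : 0 < ‖g‖ := norm_pos_iff.mpr hg
  set t := 3 * β / (σ * ‖g‖) with ht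
  have ht0 : 0 ≤ t := by positivity
  have hA0 : 0 ≤ A := by
    rw [hA, alphaHat]
    split
    · exact Real.sqrt_nonneg _
    · exact le_min (by positivity) (Real.sqrt_nonneg _)
  have hAsq : A ≤ Real.sqrt t := by
    rw [hA, alphaHat]
    split
    · exact le_refl _
    · exact min_le_right _ _
  have hA2 : A ^ 2 ≤ t := by
    calc A ^ 2 ≤ Real.sqrt t ^ 2 := pow_le_pow_left₀ hA0 hAsq 2
    _ = t := Real.sq_sqrt ht0
  have hAH : A * ‖H‖ ≤ β := by
    rw [hA, alphaHat]
    split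
    · next h0 => simp [h0, hβ0.le]
    · next h0 =>
      have hH : 0 < ‖H‖ := norm_pos_iff.mpr h0
      calc min (β / ‖H‖) (Real.sqrt t) * ‖H‖ ≤ β / ‖H‖ * ‖H‖ :=
        mul_le_mul_of_nonneg_right (min_le_left _ _) hH.le
      _ = β := div_mul_cancel₀ _ hH.ne'
  -- expand m(ŝ)
  have hinner : ⟪g, H g⟫ ≤ ‖H‖ * ‖g‖ ^ 2 := by
    calc ⟪g, H g⟫ ≤ ‖g‖ * ‖H g‖ := real_inner_le_norm _ _
    _ ≤ ‖g‖ * (‖H‖ * ‖g‖) := by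
        exact mul_le_mul_of_nonneg_left (H.le_opNorm g) hgn.le
    _ = ‖H‖ * ‖g‖ ^ 2 := by ring
  have hexp : cubicModel f₀ g H σ (sHat β σ g H) =
      f₀ - A * ‖g‖ ^ 2 + A ^ 2 / 2 * ⟪g, H g⟫ + σ / 6 * (A * ‖g‖) ^ 3 := by
    rw [cubicModel, quadModel, sHat, ← hA]
    have h1 : ⟪g, (-A) • g⟫ = -A * ‖g‖ ^ 2 := by
      rw [real_inner_smul_right, real_inner_self_eq_norm_sq]
    have h2 : ⟪(-A) • g, H ((-A) • g)⟫ = A ^ 2 * ⟪g, H g⟫ := by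
      rw [map_smul, real_inner_smul_left, real_inner_smul_right]; ring
    have h3 : ‖(-A) • g‖ = A * ‖g‖ := by
      rw [norm_smul, Real.norm_eq_abs, abs_neg, abs_of_nonneg hA0]
    rw [h1, h2, h3]; ring
  rw [hexp]
  have key1 : A ^ 2 / 2 * ⟪g, H g⟫ ≤ β / 2 * (A * ‖g‖ ^ 2) := by
    calc A ^ 2 / 2 * ⟪g, H g⟫ ≤ A ^ 2 / 2 * (‖H‖ * ‖g‖ ^ 2) := by
          exact mul_le_mul_of_nonneg_left hinner (by positivity)
    _ = (A * ‖H‖) * (A * ‖g‖ ^ 2) / 2 := by ring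
    _ ≤ β * (A * ‖g‖ ^ 2) / 2 := by
          apply div_le_div_of_nonneg_right _ (by norm_num)
          exact mul_le_mul_of_nonneg_right hAH (by positivity)
    _ = β / 2 * (A * ‖g‖ ^ 2) := by ring
  have key2 : σ / 6 * (A * ‖g‖) ^ 3 ≤ β / 2 * (A * ‖g‖ ^ 2) := by
    have h4 : σ * A ^ 2 * ‖g‖ ≤ 3 * β := by
      have := mul_le_mul_of_nonneg_left hA2 (le_of_lt (by positivity : (0:ℝ) < σ * ‖g‖))
      calc σ * A ^ 2 * ‖g‖ = σ * ‖g‖ * A ^ 2 := by ring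
      _ ≤ σ * ‖g‖ * t := this
      _ = 3 * β := by rw [ht]; field_simp
    calc σ / 6 * (A * ‖g‖) ^ 3 = (σ * A ^ 2 * ‖g‖) * (A * ‖g‖ ^ 2) / 6 := by ring
    _ ≤ (3 * β) * (A * ‖g‖ ^ 2) / 6 := by
        apply div_le_div_of_nonneg_right _ (by norm_num)
        exact mul_le_mul_of_nonneg_right h4 (by positivity)
    _ = β / 2 * (A * ‖g‖ ^ 2) := by ring
  nlinarith [key1, key2]

theorem stmt7 (n : ℕ) (hn : 0 < n)
    (f : EuclideanSpace ℝ (Fin n) → ℝ)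
    (gradf : EuclideanSpace ℝ (Fin n) → EuclideanSpace ℝ (Fin n))
    (hessf : EuclideanSpace ℝ (Fin n) → (EuclideanSpace ℝ (Fin n) →L[ℝ] EuclideanSpace ℝ (Fin n)))
    (hf : ContDiff ℝ 2 f)
    (hgradf : ∀ x, HasGradientAt f (gradf x) x)
    (hhessf : ∀ x, HasFDerivAt gradf (hessf x) x)
    (x : EuclideanSpace ℝ (Fin n)) (I : Finset (Fin n))
    (hg : blockRestr I (gradf x) ≠ 0)
    (σ β η₁ : ℝ) (hσ : 0 < σ) (hβ0 : 0 < β) (hβ1 : β < 1) (hη₁0 : 0 < η₁) (hη₁1 : η₁ < 1)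
    (s : EuclideanSpace ℝ ↥I)
    (hs : cubicModel (f x) (blockRestr I (gradf x)) (blockHess I (hessf x)) σ s ≤
      cubicModel (f x) (blockRestr I (gradf x)) (blockHess I (hessf x)) σ
        (sHat β σ (blockRestr I (gradf x)) (blockHess I (hessf x))))
    (hacc : η₁ * (quadModel (f x) (blockRestr I (gradf x)) (blockHess I (hessf x)) 0 -
        quadModel (f x) (blockRestr I (gradf x)) (blockHess I (hessf x)) s) ≤
      f x - f (x + blockIncl I s)) :
    η₁ * ((1 - β) * alphaHat β σ (blockRestr I (gradf x)) (blockHess I (hessf x)) *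
        ‖blockRestr I (gradf x)‖ ^ 2 + σ / 6 * ‖s‖ ^ 3) ≤
      f x - f (x + blockIncl I s) := by

  set g := blockRestr I (gradf x) with hgdef
  set H := blockHess I (hessf x) with hHdef
  have hkey := cauchy_decrease (f x) g H σ β hσ hβ0 hg
  have hq0 : quadModel (f x) g H 0 = f x := by
    simp [quadModel]
  have hqs : quadModel (f x) g H s = cubicModel (f x) g H σ s - σ / 6 * ‖s‖ ^ 3 := by
    rw [cubicModel]; ring
  have hchain : (1 - β) * alphaHat β σ g H * ‖g‖ ^ 2 + σ / 6 * ‖s‖ ^ 3 ≤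
      quadModel (f x) g H 0 - quadModel (f x) g H s := by
    rw [hq0, hqs]
    linarith [hkey, hs]
  calc η₁ * ((1 - β) * alphaHat β σ g H * ‖g‖ ^ 2 + σ / 6 * ‖s‖ ^ 3)
      ≤ η₁ * (quadModel (f x) g H 0 - quadModel (f x) g H s) :=
        mul_le_mul_of_nonneg_left hchain hη₁0.le
  _ ≤ f x - f (x + blockIncl I s) := hacc


end
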